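/- For a map with a cross cap in normal form, in polar coordinates u = r cos θ, v = r sin θ, the function r⁴(H² − K_ext) tends to (a₀₂ cos θ)²/(4A_θ⁶) as r → 0, which is positive whenever cos θ ≠ 0; consequently umbilical points (where H² = K_ext) do not accumulate at the cross cap along directions with cos θ ≠ 0. -/

import Mathlib

noncomputable section
open Real Filter

/-- Euclidean dot product on ℝ³ (as ℝ × ℝ × ℝ). -/
def dot3 (a b : ℝ × ℝ × ℝ) : ℝ := a.1 * b.1 + a.2.1 * b.2.1 + a.2.2 * b.2.2

/-- Cross product on ℝ³. -/
def cross3 (a b : ℝ × ℝ × ℝ) : ℝ × ℝ × ℝ :=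
  (a.2.1 * b.2.2 - a.2.2 * b.2.1, a.2.2 * b.1 - a.1 * b.2.2, a.1 * b.2.1 - a.2.1 * b.1)

/-- Determinant of three column vectors in ℝ³. -/
def det3 (a b c : ℝ × ℝ × ℝ) : ℝ := dot3 (cross3 a b) c

/-- Euclidean norm on ℝ³. -/
def norm3 (a : ℝ × ℝ × ℝ) : ℝ := Real.sqrt (dot3 a a)

/-- Partial derivative in the first variable. -/
def p1 {E : Type*} [NormedAddCommGroup E] [NormedSpace ℝ E] (f : ℝ → ℝ → E) (u v : ℝ) : E :=
  deriv (fun t => f t v) u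

/-- Partial derivative in the second variable. -/
def p2 {E : Type*} [NormedAddCommGroup E] [NormedSpace ℝ E] (f : ℝ → ℝ → E) (u v : ℝ) : E :=
  deriv (fun t => f u t) v

/-- First fundamental form coefficients. -/
def Efun (f : ℝ → ℝ → ℝ × ℝ × ℝ) (u v : ℝ) : ℝ := dot3 (p1 f u v) (p1 f u v)
def Ffun (f : ℝ → ℝ → ℝ × ℝ × ℝ) (u v : ℝ) : ℝ := dot3 (p1 f u v) (p2 f u v)
def Gfun (f : ℝ → ℝ → ℝ × ℝ × ℝ) (u v : ℝ) : ℝ := dot3 (p2 f u v) (p2 f u v)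

/-- Unit normal vector at a regular point. -/
def nuVec (f : ℝ → ℝ → ℝ × ℝ × ℝ) (u v : ℝ) : ℝ × ℝ × ℝ :=
  (norm3 (cross3 (p1 f u v) (p2 f u v)))⁻¹ • cross3 (p1 f u v) (p2 f u v)

/-- Second fundamental form coefficients. -/
def Lfun (f : ℝ → ℝ → ℝ × ℝ × ℝ) (u v : ℝ) : ℝ := dot3 (nuVec f u v) (p1 (p1 f) u v)
def Mfun (f : ℝ → ℝ → ℝ × ℝ × ℝ) (u v : ℝ) : ℝ := dot3 (nuVec f u v) (p1 (p2 f) u v)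
def Nfun (f : ℝ → ℝ → ℝ × ℝ × ℝ) (u v : ℝ) : ℝ := dot3 (nuVec f u v) (p2 (p2 f) u v)

/-- Mean curvature. -/
def Hfun (f : ℝ → ℝ → ℝ × ℝ × ℝ) (u v : ℝ) : ℝ :=
  (Efun f u v * Nfun f u v - 2 * Ffun f u v * Mfun f u v + Gfun f u v * Lfun f u v) /
    (2 * (Efun f u v * Gfun f u v - Ffun f u v ^ 2))

/-- Extrinsic (Gaussian) curvature. -/
def Kext (f : ℝ → ℝ → ℝ × ℝ × ℝ) (u v : ℝ) : ℝ :=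
  (Lfun f u v * Nfun f u v - Mfun f u v ^ 2) /
    (Efun f u v * Gfun f u v - Ffun f u v ^ 2)


def fcc (a20 a11 a02 : ℝ) : ℝ → ℝ → ℝ × ℝ × ℝ := fun u v =>
  (u, u * v, (a20 * u ^ 2 + 2 * a11 * u * v + a02 * v ^ 2) / 2)

lemma hd1 (a20 a11 a02 u v : ℝ) :
    HasDerivAt (fun t => fcc a20 a11 a02 t v) ((1:ℝ), v, a20*u + a11*v) u := by
  have hx : HasDerivAt (fun t : ℝ => t) 1 u := hasDerivAt_id' u
  have hy : HasDerivAt (fun t : ℝ => t * v) v u := by simpa using hx.mul_const v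
  have hz : HasDerivAt (fun t : ℝ => (a20*t^2+2*a11*t*v+a02*v^2)/2) (a20*u + a11*v) u := by
    have h := ((((hasDerivAt_pow 2 u).const_mul a20).add
        ((hx.const_mul (2*a11)).mul_const v)).add_const (a02*v^2)).div_const 2
    refine h.congr_deriv ?_
    ring
  exact hx.prodMk (hy.prodMk hz)

lemma hd2 (a20 a11 a02 u v : ℝ) :
    HasDerivAt (fun t => fcc a20 a11 a02 u t) ((0:ℝ), u, a11*u + a02*v) v := by
  have hx : HasDerivAt (fun _ : ℝ => u) 0 v := hasDerivAt_const v u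
  have hid : HasDerivAt (fun t : ℝ => t) 1 v := hasDerivAt_id' v
  have hy : HasDerivAt (fun t : ℝ => u * t) u v := by simpa using hid.const_mul u
  have hz : HasDerivAt (fun t : ℝ => (a20*u^2+2*a11*u*t+a02*t^2)/2) (a11*u + a02*v) v := by
    have h := (((hasDerivAt_const v (a20*u^2)).add
        (hid.const_mul (2*a11*u))).add ((hasDerivAt_pow 2 v).const_mul a02)).div_const 2
    refine h.congr_deriv ?_
    ring
  exact hx.prodMk (hy.prodMk hz)

lemma p1_eq (a20 a11 a02 : ℝ) :
    p1 (fcc a20 a11 a02) = fun u v => ((1:ℝ), v, a20*u + a11*v) := by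
  funext u v; exact (hd1 a20 a11 a02 u v).deriv

lemma p2_eq (a20 a11 a02 : ℝ) :
    p2 (fcc a20 a11 a02) = fun u v => ((0:ℝ), u, a11*u + a02*v) := by
  funext u v; exact (hd2 a20 a11 a02 u v).deriv

lemma p11_eq (a20 a11 a02 u v : ℝ) :
    p1 (p1 (fcc a20 a11 a02)) u v = ((0:ℝ), 0, a20) := by
  rw [p1_eq]
  show deriv (fun t => ((1:ℝ), v, a20*t + a11*v)) u = _
  have h : HasDerivAt (fun t : ℝ => ((1:ℝ), v, a20*t + a11*v)) ((0:ℝ), 0, a20) u := by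
    exact (hasDerivAt_const u (1:ℝ)).prodMk ((hasDerivAt_const u v).prodMk
      (by simpa using ((hasDerivAt_id' u).const_mul a20).add_const (a11*v)))
  exact h.deriv

lemma p12_eq (a20 a11 a02 u v : ℝ) :
    p1 (p2 (fcc a20 a11 a02)) u v = ((0:ℝ), 1, a11) := by
  rw [p2_eq]
  show deriv (fun t => ((0:ℝ), t, a11*t + a02*v)) u = _
  have h : HasDerivAt (fun t : ℝ => ((0:ℝ), t, a11*t + a02*v)) ((0:ℝ), 1, a11) u :=
    (hasDerivAt_const u (0:ℝ)).prodMk ((hasDerivAt_id' u).prodMk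
      (by simpa using ((hasDerivAt_id' u).const_mul a11).add_const (a02*v)))
  exact h.deriv

lemma p22_eq (a20 a11 a02 u v : ℝ) :
    p2 (p2 (fcc a20 a11 a02)) u v = ((0:ℝ), 0, a02) := by
  rw [p2_eq]
  show deriv (fun t => ((0:ℝ), u, a11*u + a02*t)) v = _
  have h : HasDerivAt (fun t : ℝ => ((0:ℝ), u, a11*u + a02*t)) ((0:ℝ), 0, a02) v :=
    (hasDerivAt_const v (0:ℝ)).prodMk ((hasDerivAt_const v u).prodMk
      (by simpa using (((hasDerivAt_id' v).const_mul a02).const_add (a11*u))))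
  exact h.deriv

lemma algH (e ff g L' M' N' W2 w : ℝ) (hW2 : W2 ≠ 0) (hw2 : w^2 = W2) :
    ((e*(w⁻¹*N') - 2*(ff)*(w⁻¹*M') + g*(w⁻¹*L'))/(2*W2))^2
      - ((w⁻¹*L')*(w⁻¹*N') - (w⁻¹*M')^2)/W2
    = ((e*N' - 2*ff*M' + g*L')^2 - 4*W2*(L'*N' - M'^2))/(4*W2^3) := by
  have h1 : (w⁻¹)^2 = W2⁻¹ := by rw [inv_pow, hw2]
  calc ((e*(w⁻¹*N') - 2*(ff)*(w⁻¹*M') + g*(w⁻¹*L'))/(2*W2))^2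
        - ((w⁻¹*L')*(w⁻¹*N') - (w⁻¹*M')^2)/W2
      = ((w⁻¹)^2*(e*N' - 2*ff*M' + g*L')^2)/(4*W2^2)
          - ((w⁻¹)^2*(L'*N' - M'^2))/W2 := by ring
    _ = (W2⁻¹*(e*N' - 2*ff*M' + g*L')^2)/(4*W2^2)
          - (W2⁻¹*(L'*N' - M'^2))/W2 := by rw [h1]
    _ = _ := by field_simp

lemma key (a20 a11 a02 u v : ℝ) (hu : u ≠ 0) :
    Hfun (fcc a20 a11 a02) u v ^ 2 - Kext (fcc a20 a11 a02) u v =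
      ((a02*u*(1 + v^2 + (a20*u+a11*v)^2)
        + 2*(a02*v)*(u*v + (a20*u+a11*v)*(a11*u+a02*v))
        + a20*u*(u^2 + (a11*u+a02*v)^2))^2
        - 4*(u^2 + (a11*u+a02*v)^2 + (v*(a11*u+a02*v) - u*(a20*u+a11*v))^2)
            *(a20*u*(a02*u) - (a02*v)^2))
      / (4*(u^2 + (a11*u+a02*v)^2 + (v*(a11*u+a02*v) - u*(a20*u+a11*v))^2)^3) := by
  have h1 : p1 (fcc a20 a11 a02) u v = ((1:ℝ), v, a20*u+a11*v) := by rw [p1_eq]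
  have h2 : p2 (fcc a20 a11 a02) u v = ((0:ℝ), u, a11*u+a02*v) := by rw [p2_eq]
  have hW : cross3 (p1 (fcc a20 a11 a02) u v) (p2 (fcc a20 a11 a02) u v)
      = (v*(a11*u+a02*v) - u*(a20*u+a11*v), -(a11*u+a02*v), u) := by
    rw [h1, h2]; simp only [cross3, Prod.mk.injEq]
    refine ⟨by ring, by ring, by ring⟩
  set Wv : ℝ×ℝ×ℝ := (v*(a11*u+a02*v) - u*(a20*u+a11*v), -(a11*u+a02*v), u) with hWv
  set W2 : ℝ := u^2 + (a11*u+a02*v)^2 + (v*(a11*u+a02*v) - u*(a20*u+a11*v))^2 with hW2def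
  have hW2pos : 0 < W2 := by
    have h0 : 0 < u ^ 2 := by positivity
    rw [hW2def]
    nlinarith [sq_nonneg (a11*u+a02*v), sq_nonneg (v*(a11*u+a02*v) - u*(a20*u+a11*v))]
  have hdot : dot3 Wv Wv = W2 := by rw [hWv, hW2def]; simp only [dot3]; ring
  set w : ℝ := norm3 Wv with hwdef
  have hw2 : w ^ 2 = W2 := by rw [hwdef, norm3, hdot, Real.sq_sqrt hW2pos.le]
  have hwpos : 0 < w := by rw [hwdef, norm3, hdot]; exact Real.sqrt_pos.mpr hW2pos
  have hnu : nuVec (fcc a20 a11 a02) u v = w⁻¹ • Wv := by rw [nuVec, hW]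
  have hE : Efun (fcc a20 a11 a02) u v = 1 + v^2 + (a20*u+a11*v)^2 := by
    rw [Efun, h1]; simp only [dot3]; ring
  have hF : Ffun (fcc a20 a11 a02) u v = u*v + (a20*u+a11*v)*(a11*u+a02*v) := by
    rw [Ffun, h1, h2]; simp only [dot3]; ring
  have hG : Gfun (fcc a20 a11 a02) u v = u^2 + (a11*u+a02*v)^2 := by
    rw [Gfun, h2]; simp only [dot3]; ring
  have hL : Lfun (fcc a20 a11 a02) u v = w⁻¹*(a20*u) := by
    rw [Lfun, hnu, p11_eq, hWv]
    simp only [dot3, Prod.smul_fst, Prod.smul_snd, smul_eq_mul]; ring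
  have hM : Mfun (fcc a20 a11 a02) u v = w⁻¹*(-(a02*v)) := by
    rw [Mfun, hnu, p12_eq, hWv]
    simp only [dot3, Prod.smul_fst, Prod.smul_snd, smul_eq_mul]; ring
  have hN : Nfun (fcc a20 a11 a02) u v = w⁻¹*(a02*u) := by
    rw [Nfun, hnu, p22_eq, hWv]
    simp only [dot3, Prod.smul_fst, Prod.smul_snd, smul_eq_mul]; ring
  have hEG : (1 + v^2 + (a20*u+a11*v)^2) * (u^2 + (a11*u+a02*v)^2)
      - (u*v + (a20*u+a11*v)*(a11*u+a02*v))^2 = W2 := by rw [hW2def]; ring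
  rw [Hfun, Kext, hE, hF, hG, hL, hM, hN, hEG,
    algH _ _ _ _ _ _ _ _ hW2pos.ne' hw2]
  congr 1
  ring

/-- along each direction with `cos θ ≠ 0`, the function
`r⁴(H² − K_ext)` tends to `(a₀₂cos θ)²/(4A_θ⁶) > 0` as `r → 0`; hence umbilics
(`H² = K_ext`) do not accumulate at the cross cap along such directions. -/
theorem stmt_16 (a20 a11 a02 : ℝ) (ha02 : 0 < a02) (θ : ℝ) (hθ : Real.cos θ ≠ 0) :
    let f : ℝ → ℝ → ℝ × ℝ × ℝ := fun u v =>
      (u, u * v, (a20 * u ^ 2 + 2 * a11 * u * v + a02 * v ^ 2) / 2)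
    let A : ℝ := Real.sqrt (Real.cos θ ^ 2 + (a11 * Real.cos θ + a02 * Real.sin θ) ^ 2)
    Tendsto
        (fun r : ℝ => r ^ 4 *
          ((Hfun f (r * Real.cos θ) (r * Real.sin θ)) ^ 2 -
            Kext f (r * Real.cos θ) (r * Real.sin θ)))
        (nhdsWithin 0 {0}ᶜ)
        (nhds ((a02 * Real.cos θ) ^ 2 / (4 * A ^ 6))) ∧
      0 < (a02 * Real.cos θ) ^ 2 / (4 * A ^ 6) ∧
      ∀ᶠ r in nhdsWithin (0:ℝ) {0}ᶜ,
        (Hfun f (r * Real.cos θ) (r * Real.sin θ)) ^ 2 ≠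
          Kext f (r * Real.cos θ) (r * Real.sin θ) := by
  intro f A
  have hf : f = fcc a20 a11 a02 := rfl
  set c : ℝ := Real.cos θ with hc
  set s : ℝ := Real.sin θ with hs
  -- constants
  set A2 : ℝ := c^2 + (a11*c + a02*s)^2 with hA2
  set Q : ℝ := a02*c*(s^2 + (a20*c+a11*s)^2)
      + 2*(a02*s)*(c*s + (a20*c+a11*s)*(a11*c+a02*s))
      + a20*c*(c^2 + (a11*c+a02*s)^2) with hQ
  set D : ℝ := a20*c*(a02*c) - (a02*s)^2 with hD
  set Pc : ℝ := a02*s^2 - a20*c^2 with hPc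
  have hA2pos : 0 < A2 := by
    have h0 : 0 < c^2 := by positivity
    rw [hA2]; nlinarith [sq_nonneg (a11*c + a02*s)]
  have hA : A = Real.sqrt A2 := rfl
  have hA6 : A ^ 6 = A2 ^ 3 := by
    rw [hA, show (6:ℕ) = 2*3 from rfl, pow_mul, Real.sq_sqrt hA2pos.le]
  -- the limit function
  set F : ℝ → ℝ := fun r =>
    ((a02*c + r^2*Q)^2 - 4*r^2*D*(A2 + r^2*Pc^2)) / (4*(A2 + r^2*Pc^2)^3) with hFdef
  have hYpos : ∀ r : ℝ, 0 < A2 + r^2*Pc^2 := fun r =>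
    add_pos_of_pos_of_nonneg hA2pos (by positivity)
  have heq : ∀ r : ℝ, r ≠ 0 →
      r ^ 4 * ((Hfun f (r*c) (r*s)) ^ 2 - Kext f (r*c) (r*s)) = F r := by
    intro r hr
    rw [hf, key a20 a11 a02 (r*c) (r*s) (mul_ne_zero hr hθ)]
    have hX : (r*c)^2 + (a11*(r*c)+a02*(r*s))^2
        + ((r*s)*(a11*(r*c)+a02*(r*s)) - (r*c)*(a20*(r*c)+a11*(r*s)))^2
        = r^2 * (A2 + r^2*Pc^2) := by rw [hA2, hPc]; ring
    have hNb : (a02*(r*c)*(1 + (r*s)^2 + (a20*(r*c)+a11*(r*s))^2)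
        + 2*(a02*(r*s))*((r*c)*(r*s) + (a20*(r*c)+a11*(r*s))*(a11*(r*c)+a02*(r*s)))
        + a20*(r*c)*((r*c)^2 + (a11*(r*c)+a02*(r*s))^2))^2
        - 4*((r*c)^2 + (a11*(r*c)+a02*(r*s))^2
            + ((r*s)*(a11*(r*c)+a02*(r*s)) - (r*c)*(a20*(r*c)+a11*(r*s)))^2)
          *(a20*(r*c)*(a02*(r*c)) - (a02*(r*s))^2)
        = r^2 * ((a02*c + r^2*Q)^2 - 4*r^2*D*(A2 + r^2*Pc^2)) := by
      rw [hA2, hPc, hQ, hD]; ring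
    rw [hNb, hX]
    have cancel : ∀ Nc Y : ℝ, Y ≠ 0 →
        r^4 * ((r^2*Nc)/(4*(r^2*Y)^3)) = Nc/(4*Y^3) := by
      intro Nc Y hY; field_simp
    exact cancel _ _ (hYpos r).ne'
  have hFcont : Continuous F := by
    rw [hFdef]
    apply Continuous.div (by fun_prop) (by fun_prop)
    intro r
    have := hYpos r
    positivity
  have hF0 : F 0 = (a02*c)^2 / (4*A^6) := by
    rw [hFdef, hA6]; norm_num
  have htend : Tendsto
      (fun r : ℝ => r ^ 4 * ((Hfun f (r*c) (r*s)) ^ 2 - Kext f (r*c) (r*s)))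
      (nhdsWithin 0 {0}ᶜ) (nhds ((a02*c) ^ 2 / (4*A^6))) := by
    rw [← hF0]
    refine Tendsto.congr' ?_ ((hFcont.tendsto 0).mono_left nhdsWithin_le_nhds)
    filter_upwards [self_mem_nhdsWithin] with r hr
    exact (heq r hr).symm
  have hpos : 0 < (a02*c) ^ 2 / (4*A^6) := by
    have h1 : 0 < (a02*c)^2 := by
      have : a02*c ≠ 0 := mul_ne_zero ha02.ne' hθ
      positivity
    have h2 : 0 < 4*A^6 := by rw [hA6]; positivity
    exact div_pos h1 h2
  refine ⟨htend, hpos, ?_⟩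
  have h3 := htend.eventually (eventually_gt_nhds hpos)
  filter_upwards [h3] with r hr hEqK
  rw [hEqK, sub_self, mul_zero] at hr
  exact lt_irrefl 0 hr
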